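/- Let y be a real Gaussian random variable with mean a and variance σ² > 0, and let â ∈ ℝ satisfy a·â ≥ 0. Then E[ (â y/σ²) · tanh′(â y/σ²) ] ≥ 0, where tanh′ is the derivative of tanh. -/
import Mathlib


open MeasureTheory ProbabilityTheory NNReal ENNReal

lemma my_hasDerivAt_tanh (x : ℝ) : HasDerivAt Real.tanh (1 / Real.cosh x ^ 2) x := by
  have h := (Real.hasDerivAt_sinh x).div (Real.hasDerivAt_cosh x) (Real.cosh_pos x).ne'
  have e : (Real.cosh x * Real.cosh x - Real.sinh x * Real.sinh x) / Real.cosh x ^ 2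
      = 1 / Real.cosh x ^ 2 := by
    rw [show Real.cosh x * Real.cosh x - Real.sinh x * Real.sinh x
        = Real.cosh x ^ 2 - Real.sinh x ^ 2 by ring, Real.cosh_sq_sub_sinh_sq]
  rw [e] at h
  exact (funext Real.tanh_eq_sinh_div_cosh : Real.tanh = _) ▸ h

lemma my_deriv_tanh (x : ℝ) : deriv Real.tanh x = 1 / Real.cosh x ^ 2 :=
  (my_hasDerivAt_tanh x).deriv

/-- If `y ~ N(a, σ²)` with `σ > 0` and `â ∈ ℝ` satisfies `a·â ≥ 0`,
then `E[(â y/σ²) · tanh′(â y/σ²)] ≥ 0`, where `tanh′` is the derivative of `tanh`. -/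
theorem statement8 (a ahat σ : ℝ) (hσ : 0 < σ) (h : 0 ≤ a * ahat) :
    0 ≤ ∫ y, (ahat * y / σ^2) * deriv Real.tanh (ahat * y / σ^2)
      ∂(gaussianReal a ⟨σ^2, sq_nonneg σ⟩) := by
  rcases eq_or_ne ahat 0 with rfl | hne
  · simp
  have hσ2 : (0:ℝ) < σ ^ 2 := by positivity
  set v : ℝ≥0 := ⟨σ^2, sq_nonneg σ⟩ with hv
  have hvR : (v : ℝ) = σ ^ 2 := rfl
  have hv0 : v ≠ 0 := by
    intro h0
    have h1 : (v : ℝ) = 0 := by rw [h0]; simp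
    rw [hvR] at h1
    exact hσ2.ne' h1
  set G : ℝ → ℝ := fun y => (ahat * y / σ^2) * deriv Real.tanh (ahat * y / σ^2) with hG
  have hD : ∀ t : ℝ, 0 ≤ deriv Real.tanh t := by
    intro t; rw [my_deriv_tanh]; positivity
  rw [gaussianReal_of_var_ne_zero a hv0]
  have hpdf : gaussianPDF a v = fun x => ((gaussianPDFReal a v x).toNNReal : ℝ≥0∞) := rfl
  rw [hpdf, integral_withDensity_eq_integral_smul
      (measurable_gaussianPDFReal a v).real_toNNReal G]
  have hsmul : ∀ y : ℝ, (gaussianPDFReal a v y).toNNReal • G y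
      = gaussianPDFReal a v y * G y := by
    intro y
    rw [NNReal.smul_def, Real.coe_toNNReal _ (gaussianPDFReal_nonneg a v y), smul_eq_mul]
  simp_rw [hsmul]
  set F : ℝ → ℝ := fun y => gaussianPDFReal a v y * G y with hF
  -- pdf monotonicity under reflection
  have hφ : ∀ y : ℝ, 0 ≤ a * y → gaussianPDFReal a v (-y) ≤ gaussianPDFReal a v y := by
    intro y hay
    rw [gaussianPDFReal, gaussianPDFReal]
    refine mul_le_mul_of_nonneg_left (Real.exp_le_exp.2 ?_) (by positivity)
    rw [hvR]
    rw [div_le_div_iff₀ (by positivity) (by positivity)]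
    nlinarith [sq_nonneg σ]
  -- oddness of G
  have hGodd : ∀ y : ℝ, G (-y) = - G y := by
    intro y
    simp only [hG]
    rw [show ahat * (-y) / σ ^ 2 = -(ahat * y / σ ^ 2) by ring,
      my_deriv_tanh, my_deriv_tanh, Real.cosh_neg]
    ring
  -- key pointwise inequality
  have key : ∀ y : ℝ, 0 ≤ F y + F (-y) := by
    intro y
    have hsplit : F y + F (-y)
        = (gaussianPDFReal a v y - gaussianPDFReal a v (-y)) * G y := by
      simp only [hF]
      rw [hGodd y]
      ring
    rw [hsplit]
    have hahat2 : (0:ℝ) < ahat ^ 2 := by positivity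
    rcases le_or_gt 0 (ahat * y) with h1 | h1
    · have hay : 0 ≤ a * y := by nlinarith [mul_nonneg h h1]
      exact mul_nonneg (sub_nonneg.2 (hφ y hay))
        (mul_nonneg (div_nonneg h1 hσ2.le) (hD _))
    · have hay : 0 ≤ a * (-y) := by nlinarith [mul_nonneg h (neg_nonneg.2 h1.le)]
      have hφ' := hφ (-y) hay
      rw [neg_neg] at hφ'
      have hGy : G y ≤ 0 :=
        mul_nonpos_of_nonpos_of_nonneg (div_nonpos_of_nonpos_of_nonneg h1.le hσ2.le) (hD _)
      nlinarith [mul_nonneg (neg_nonneg.2 (sub_nonpos.2 hφ')) (neg_nonneg.2 hGy)]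
  by_cases hInt : Integrable F
  · have h1 : 0 ≤ ∫ y, (F y + F (-y)) := integral_nonneg key
    rw [integral_add hInt hInt.comp_neg, integral_neg_eq_self F volume] at h1
    linarith
  · rw [integral_undef hInt]
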